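/- Let f : {0,1}^n → ℝ be a monotone function. Let Y be the indicator vector of a uniformly random B-subset of {1,…,n} (sampling B items without replacement), and let Z be the indicator vector of the set obtained by drawing B items uniformly with replacement (so Z has at most B ones). Then for any threshold C, P(f(Z) > C) ≤ P(f(Y) > C). -/

import Mathlib

open Finset

namespace Stmt4Aux

open Classical in
/-- Number of `B`-element supersets of a `b`-element set. -/
lemma card_supersets (n b B : ℕ) (S : Finset (Fin n)) (hSb : S.card = b) (hbB : b ≤ B) :
    ((univ : Finset (Finset (Fin n))).filter fun T => T.card = B ∧ S ⊆ T).card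
      = (n - b).choose (B - b) := by
  have h1 : Sᶜ.card = n - b := by
    rw [Finset.card_compl, hSb, Fintype.card_fin]
  rw [← h1, ← Finset.card_powersetCard (B - b) Sᶜ]
  apply Finset.card_bij' (fun T _ => T \ S) (fun U _ => U ∪ S)
  · intro T hT
    simp only [mem_filter, mem_univ, true_and] at hT
    rw [Finset.mem_powersetCard]
    constructor
    · intro x hx; simp only [Finset.mem_compl]; exact (Finset.mem_sdiff.mp hx).2
    · rw [Finset.card_sdiff_of_subset hT.2, hT.1, hSb]
  · intro U hU
    rw [Finset.mem_powersetCard] at hU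
    have hdisj : Disjoint U S := by
      rw [Finset.disjoint_left]; intro x hx; exact Finset.mem_compl.mp (hU.1 hx)
    simp only [mem_filter, mem_univ, true_and]
    constructor
    · rw [Finset.card_union_of_disjoint hdisj, hU.2, hSb]; omega
    · exact Finset.subset_union_right
  · intro T hT
    simp only [mem_filter, mem_univ, true_and] at hT
    exact Finset.sdiff_union_of_subset hT.2
  · intro U hU
    rw [Finset.mem_powersetCard] at hU
    have hdisj : Disjoint U S := by
      rw [Finset.disjoint_left]; intro x hx; exact Finset.mem_compl.mp (hU.1 hx)
    rw [Finset.union_sdiff_right, Finset.sdiff_eq_self_of_disjoint hdisj]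

open Classical in
/-- Any two equicardinal subsets of `Fin n` are related by a permutation. -/
lemma exists_perm_image (n : ℕ) (S S' : Finset (Fin n)) (h : S.card = S'.card) :
    ∃ e : Equiv.Perm (Fin n), S.image e = S' := by
  have hc : Fintype.card {x // x ∈ S} = Fintype.card {x // x ∈ S'} := by
    simp [Fintype.card_coe, h]
  have hc' : Fintype.card {x // ¬ x ∈ S} = Fintype.card {x // ¬ x ∈ S'} := by
    have := Fintype.card_subtype_compl (fun x => x ∈ S)
    have := Fintype.card_subtype_compl (fun x => x ∈ S')
    omega
  let e1 := Fintype.equivOfCardEq hc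
  let e2 := Fintype.equivOfCardEq hc'
  let e : Equiv.Perm (Fin n) :=
    (Equiv.sumCompl (· ∈ S)).symm.trans ((e1.sumCongr e2).trans (Equiv.sumCompl (· ∈ S')))
  refine ⟨e, ?_⟩
  have hmaps : ∀ x ∈ S, e x ∈ S' := by
    intro x hx
    have : (Equiv.sumCompl (· ∈ S)).symm x = Sum.inl ⟨x, hx⟩ := by
      simp [Equiv.sumCompl_symm_apply_of_pos hx]
    simp only [e, Equiv.trans_apply, this, Equiv.sumCongr_apply, Sum.map_inl,
      Equiv.sumCompl_apply_inl]
    exact (e1 ⟨x, hx⟩).2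
  apply Finset.eq_of_subset_of_card_le
  · intro y hy
    obtain ⟨x, hx, rfl⟩ := Finset.mem_image.mp hy
    exact hmaps x hx
  · rw [Finset.card_image_of_injective _ e.injective, h]

open Classical in
/-- The number of functions `Fin B → Fin n` with a given image depends only on the
cardinality of the image. -/
lemma fiber_card_constant (n B : ℕ) (S S' : Finset (Fin n)) (h : S.card = S'.card) :
    ((univ : Finset (Fin B → Fin n)).filter fun g => Finset.image g univ = S).card
      = ((univ : Finset (Fin B → Fin n)).filter fun g => Finset.image g univ = S').card := by
  obtain ⟨e, he⟩ := exists_perm_image n S S' h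
  apply Finset.card_bij' (fun g _ => (e ∘ g)) (fun g _ => (e.symm ∘ g))
  · intro g hg
    simp only [mem_filter, mem_univ, true_and] at hg ⊢
    rw [← Finset.image_image, hg, he]
  · intro g hg
    simp only [mem_filter, mem_univ, true_and] at hg ⊢
    rw [← Finset.image_image, hg, ← he, Finset.image_image]
    simp
  · intro g _; funext i; simp
  · intro g _; funext i; simp

open Classical in
/-- Key double-counting inequality between level-`b` and level-`B` counts. -/
lemma double_count (n b B : ℕ) (f : Finset (Fin n) → ℝ)
    (hf : ∀ S T : Finset (Fin n), S ⊆ T → f S ≤ f T) (C : ℝ) (hbB : b ≤ B) :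
    ((univ : Finset (Finset (Fin n))).filter fun S => S.card = b ∧ C < f S).card
        * (n - b).choose (B - b)
      ≤ ((univ : Finset (Finset (Fin n))).filter fun S => S.card = B ∧ C < f S).card
        * B.choose b := by
  set Ab := (univ : Finset (Finset (Fin n))).filter fun S => S.card = b ∧ C < f S with hAb
  set AB := (univ : Finset (Finset (Fin n))).filter fun S => S.card = B ∧ C < f S with hAB
  calc Ab.card * (n - b).choose (B - b)
      = ∑ S ∈ Ab, ((univ : Finset (Finset (Fin n))).filter
          fun T => T.card = B ∧ S ⊆ T).card := by
        rw [Finset.sum_congr rfl (fun S hS => card_supersets n b B S (by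
          simp only [hAb, mem_filter] at hS; exact hS.2.1) hbB), Finset.sum_const, smul_eq_mul]
    _ ≤ ∑ S ∈ Ab, (AB.filter fun T => S ⊆ T).card := by
        apply Finset.sum_le_sum
        intro S hS
        simp only [hAb, mem_filter, mem_univ, true_and] at hS
        apply Finset.card_le_card
        intro T hT
        simp only [mem_filter, mem_univ, true_and, hAB] at hT ⊢
        exact ⟨⟨hT.1, lt_of_lt_of_le hS.2 (hf _ _ hT.2)⟩, hT.2⟩
    _ = ∑ T ∈ AB, (Ab.filter fun S => S ⊆ T).card := by
        simp only [Finset.card_filter]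
        rw [Finset.sum_comm]
    _ ≤ ∑ T ∈ AB, B.choose b := by
        apply Finset.sum_le_sum
        intro T hT
        simp only [hAB, mem_filter, mem_univ, true_and] at hT
        calc (Ab.filter fun S => S ⊆ T).card
            ≤ (Finset.powersetCard b T).card := by
              apply Finset.card_le_card
              intro S hS
              simp only [hAb, mem_filter, mem_univ, true_and] at hS
              rw [Finset.mem_powersetCard]
              exact ⟨hS.2, hS.1.1⟩
          _ = B.choose b := by rw [Finset.card_powersetCard, hT.1]
    _ = AB.card * B.choose b := by rw [Finset.sum_const, smul_eq_mul]

open Classical in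
/-- `q_b ≤ q_B` in counting form: `N_b * C(n,B) ≤ N_B * C(n,b)`. -/
lemma level_ineq (n b B : ℕ) (hbB : b ≤ B) (hB : B ≤ n) (f : Finset (Fin n) → ℝ)
    (hf : ∀ S T : Finset (Fin n), S ⊆ T → f S ≤ f T) (C : ℝ) :
    ((univ : Finset (Finset (Fin n))).filter fun S => S.card = b ∧ C < f S).card
        * n.choose B
      ≤ ((univ : Finset (Finset (Fin n))).filter fun S => S.card = B ∧ C < f S).card
        * n.choose b := by
  have key := double_count n b B f hf C hbB
  have hid : n.choose B * B.choose b = n.choose b * (n - b).choose (B - b) :=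
    Nat.choose_mul hbB
  have hpos : 0 < B.choose b := Nat.choose_pos hbB
  apply Nat.le_of_mul_le_mul_right (c := B.choose b) _ hpos
  calc ((univ : Finset (Finset (Fin n))).filter fun S => S.card = b ∧ C < f S).card
        * n.choose B * B.choose b
      = ((univ : Finset (Finset (Fin n))).filter fun S => S.card = b ∧ C < f S).card
        * (n - b).choose (B - b) * n.choose b := by rw [mul_assoc, hid]; ring
    _ ≤ ((univ : Finset (Finset (Fin n))).filter fun S => S.card = B ∧ C < f S).card
        * B.choose b * n.choose b := Nat.mul_le_mul_right _ key
    _ = ((univ : Finset (Finset (Fin n))).filter fun S => S.card = B ∧ C < f S).card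
        * n.choose b * B.choose b := by ring

end Stmt4Aux

open Stmt4Aux in
open Classical in
/-- Monotone functions: with-replacement sampling is stochastically dominated by
without-replacement sampling.  `Z` is the indicator of the set of `B` uniform draws with
replacement, and `Y` the indicator of a uniform `B`-subset; then
`P(f(Z) > C) ≤ P(f(Y) > C)`.  Vectors in `{0,1}ⁿ` are represented by the subsets of
coordinates equal to `1`. -/
theorem stmt4 (n : ℕ) (hn : 0 < n) (B : ℕ) (hB : B ≤ n)
    (f : Finset (Fin n) → ℝ) (hf : ∀ S T : Finset (Fin n), S ⊆ T → f S ≤ f T)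
    (C : ℝ) :
    (((Finset.univ : Finset (Fin B → Fin n)).filter
        (fun g => C < f (Finset.image g Finset.univ))).card : ℝ) / (n : ℝ) ^ B
      ≤ (((Finset.univ : Finset (Finset (Fin n))).filter
        (fun S => S.card = B ∧ C < f S)).card : ℝ) / (n.choose B : ℝ) := by
  -- notation
  set G : Finset (Fin n) → ℕ := fun S =>
    ((univ : Finset (Fin B → Fin n)).filter fun g => Finset.image g univ = S).card with hG
  set F := (Finset.univ : Finset (Fin B → Fin n)).filter
      (fun g => C < f (Finset.image g Finset.univ)) with hF
  set AB := (Finset.univ : Finset (Finset (Fin n))).filter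
      (fun S => S.card = B ∧ C < f S) with hAB
  -- reduce to the natural-number inequality
  have hpow : (0 : ℝ) < (n : ℝ) ^ B := by positivity
  have hch : (0 : ℝ) < (n.choose B : ℝ) := by exact_mod_cast Nat.choose_pos hB
  rw [div_le_div_iff₀ hpow hch]
  have key : F.card * n.choose B ≤ AB.card * n ^ B := by
    -- F.card as a sum of fiber sizes over sets with f > C
    have hFsum : F.card = ∑ S ∈ (univ : Finset (Finset (Fin n))).filter (fun S => C < f S),
        G S := by
      rw [Finset.card_eq_sum_card_fiberwise
        (f := fun g : Fin B → Fin n => Finset.image g univ)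
        (t := (univ : Finset (Finset (Fin n))).filter (fun S => C < f S))
        (by intro g hg
            simp only [hF, mem_filter, mem_univ, true_and] at hg
            simp only [mem_filter, mem_univ, true_and]
            simpa using hg)]
      apply Finset.sum_congr rfl
      intro S hS
      simp only [mem_filter, mem_univ, true_and] at hS
      congr 1
      ext g
      simp only [hF, hG, mem_filter, mem_univ, true_and]
      constructor
      · exact fun h => h.2
      · exact fun h => ⟨h ▸ hS, h⟩
    -- total count of functions as a sum of fiber sizes
    have hTot : ∑ S ∈ (univ : Finset (Finset (Fin n))), G S = n ^ B := by
      rw [← Finset.card_eq_sum_card_fiberwise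
        (f := fun g : Fin B → Fin n => Finset.image g univ)
        (t := (univ : Finset (Finset (Fin n))))
        (by intro g _; exact mem_univ _)]
      simp [Fintype.card_fun]
    -- group by cardinality
    have hmapsC : ∀ S ∈ (univ : Finset (Finset (Fin n))).filter (fun S => C < f S),
        S.card ∈ Finset.range (n + 1) := by
      intro S _
      rw [Finset.mem_range]
      have := Finset.card_le_univ S
      simp only [Finset.card_univ, Fintype.card_fin] at this
      omega
    have hmapsU : ∀ S ∈ (univ : Finset (Finset (Fin n))),
        S.card ∈ Finset.range (n + 1) := by
      intro S _
      rw [Finset.mem_range]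
      have := Finset.card_le_univ S
      simp only [Finset.card_univ, Fintype.card_fin] at this
      omega
    have hsplit1 : ∑ S ∈ (univ : Finset (Finset (Fin n))).filter (fun S => C < f S),
        (G S * n.choose B)
        = ∑ b ∈ Finset.range (n + 1),
            ∑ S ∈ ((univ : Finset (Finset (Fin n))).filter (fun S => C < f S)).filter
              (fun S => S.card = b), (G S * n.choose B) :=
      (Finset.sum_fiberwise_of_maps_to hmapsC _).symm
    have hsplit2 : ∑ S ∈ (univ : Finset (Finset (Fin n))), G S
        = ∑ b ∈ Finset.range (n + 1),
            ∑ S ∈ (univ : Finset (Finset (Fin n))).filter (fun S => S.card = b), G S :=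
      (Finset.sum_fiberwise_of_maps_to hmapsU _).symm
    -- per-cardinality inequality
    have hper : ∀ b ∈ Finset.range (n + 1),
        (∑ S ∈ ((univ : Finset (Finset (Fin n))).filter (fun S => C < f S)).filter
          (fun S => S.card = b), (G S * n.choose B))
        ≤ AB.card * ∑ S ∈ (univ : Finset (Finset (Fin n))).filter (fun S => S.card = b),
            G S := by
      intro b _
      set Ab := (univ : Finset (Finset (Fin n))).filter (fun S => S.card = b ∧ C < f S)
        with hAb
      have hAbeq : ((univ : Finset (Finset (Fin n))).filter (fun S => C < f S)).filter
          (fun S => S.card = b) = Ab := by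
        ext S
        simp only [hAb, mem_filter, mem_univ, true_and]
        tauto
      rw [hAbeq]
      rcases Finset.eq_empty_or_nonempty Ab with hE | ⟨S0, hS0⟩
      · rw [hE]; simp
      · have hS0' : S0.card = b ∧ C < f S0 := by
          simpa only [hAb, mem_filter, mem_univ, true_and] using hS0
        set c := G S0 with hc
        have hGc : ∀ S : Finset (Fin n), S.card = b → G S = c := fun S hS =>
          fiber_card_constant n B S S0 (by rw [hS, hS0'.1])
        have hconstAb : ∑ S ∈ Ab, (G S * n.choose B) = Ab.card * (c * n.choose B) := by
          have h1 : ∀ S ∈ Ab, G S * n.choose B = c * n.choose B := by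
            intro S hS
            simp only [hAb, mem_filter, mem_univ, true_and] at hS
            rw [hGc S hS.1]
          rw [Finset.sum_congr rfl h1, Finset.sum_const, smul_eq_mul]
        have hconstU : ∑ S ∈ (univ : Finset (Finset (Fin n))).filter (fun S => S.card = b),
            G S = n.choose b * c := by
          have h1 : ∀ S ∈ (univ : Finset (Finset (Fin n))).filter (fun S => S.card = b),
              G S = c := by
            intro S hS
            simp only [mem_filter, mem_univ, true_and] at hS
            exact hGc S hS
          rw [Finset.sum_congr rfl h1, Finset.sum_const, smul_eq_mul]
          congr 1
          have h2 : (univ : Finset (Finset (Fin n))).filter (fun S => S.card = b)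
              = Finset.powersetCard b (univ : Finset (Fin n)) := by
            ext S
            simp [Finset.mem_powersetCard]
          rw [h2, Finset.card_powersetCard, Finset.card_univ, Fintype.card_fin]
        rw [hconstAb, hconstU]
        by_cases hbB : b ≤ B
        · have hlvl := level_ineq n b B hbB hB f hf C
          rw [← hAb] at hlvl
          calc Ab.card * (c * n.choose B) = (Ab.card * n.choose B) * c := by ring
            _ ≤ (AB.card * n.choose b) * c := Nat.mul_le_mul_right _ hlvl
            _ = AB.card * (n.choose b * c) := by ring
        · -- b > B : the fiber over any set of size b is empty
          have hc0 : c = 0 := by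
            rw [hc, hG, Finset.card_eq_zero]
            rw [Finset.filter_eq_empty_iff]
            intro g _
            intro him
            have h1 : (Finset.image g univ).card ≤ B := by
              calc (Finset.image g univ).card ≤ (univ : Finset (Fin B)).card :=
                  Finset.card_image_le
                _ = B := by simp
            rw [him, hS0'.1] at h1
            omega
          rw [hc0]
          simp
    calc F.card * n.choose B
        = ∑ S ∈ (univ : Finset (Finset (Fin n))).filter (fun S => C < f S),
            (G S * n.choose B) := by rw [hFsum, Finset.sum_mul]
      _ = ∑ b ∈ Finset.range (n + 1),
            ∑ S ∈ ((univ : Finset (Finset (Fin n))).filter (fun S => C < f S)).filter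
              (fun S => S.card = b), (G S * n.choose B) := hsplit1
      _ ≤ ∑ b ∈ Finset.range (n + 1),
            AB.card * ∑ S ∈ (univ : Finset (Finset (Fin n))).filter (fun S => S.card = b),
              G S := Finset.sum_le_sum hper
      _ = AB.card * ∑ b ∈ Finset.range (n + 1),
            ∑ S ∈ (univ : Finset (Finset (Fin n))).filter (fun S => S.card = b), G S := by
          rw [Finset.mul_sum]
      _ = AB.card * n ^ B := by rw [← hsplit2, hTot]
  calc (F.card : ℝ) * (n.choose B : ℝ) = ((F.card * n.choose B : ℕ) : ℝ) := by push_cast; ring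
    _ ≤ ((AB.card * n ^ B : ℕ) : ℝ) := by exact_mod_cast key
    _ = (AB.card : ℝ) * (n : ℝ) ^ B := by push_cast; ring
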